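/- Let Φ be a finite set, inc, exc : Φ → ℝ with inc(ψ) > 0 and exc(ψ) > 0 for all ψ ∈ Φ, C > 0, and post(S) = C · (∏_{φ ∈ S} inc(φ)) · (∏_{φ ∈ Φ \ S} exc(φ)) for S ⊆ Φ. Then a subset S ⊆ Φ maximizes post over all subsets of Φ if and only if {φ ∈ Φ | inc(φ) > exc(φ)} ⊆ S ⊆ {φ ∈ Φ | inc(φ) ≥ exc(φ)}; in particular, every maximizer contains every filter with strictly larger inclusion weight and no filter with strictly smaller inclusion weight, and filters with tied weights may be included or dropped without changing the maximum. -/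
import Mathlib


theorem squid_abduction_maximizer_characterization
    {α : Type*} [DecidableEq α] (Φ : Finset α) (inc exc : α → ℝ)
    (hinc : ∀ ψ ∈ Φ, 0 < inc ψ) (hexc : ∀ ψ ∈ Φ, 0 < exc ψ)
    (C : ℝ) (hC : 0 < C)
    (post : Finset α → ℝ)
    (hpost : ∀ S, post S = C * (∏ φ ∈ S, inc φ) * (∏ φ ∈ Φ \ S, exc φ))
    (S : Finset α) (hS : S ⊆ Φ) :
    (∀ T ⊆ Φ, post T ≤ post S) ↔
      (Φ.filter (fun φ => exc φ < inc φ) ⊆ S ∧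
       S ⊆ Φ.filter (fun φ => exc φ ≤ inc φ)) := by
  have key : ∀ T : Finset α, T ⊆ Φ →
      post T = C * ∏ φ ∈ Φ, (if φ ∈ T then inc φ else exc φ) := by
    intro T hT
    rw [hpost, mul_assoc]
    congr 1
    rw [Finset.prod_ite]
    congr 1
    · congr 1
      rw [Finset.filter_mem_eq_inter, Finset.inter_eq_right.mpr hT]
    · congr 1
      rw [Finset.sdiff_eq_filter]
  constructor
  · intro hmax
    constructor
    · intro φ hφ
      simp only [Finset.mem_filter] at hφ
      obtain ⟨hφΦ, hlt⟩ := hφ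
      by_contra hφS
      have hT : insert φ S ⊆ Φ := Finset.insert_subset hφΦ hS
      have := hmax (insert φ S) hT
      rw [key S hS, key _ hT] at this
      have hprod : (∏ ψ ∈ Φ, (if ψ ∈ S then inc ψ else exc ψ)) <
          ∏ ψ ∈ Φ, (if ψ ∈ insert φ S then inc ψ else exc ψ) := by
        apply Finset.prod_lt_prod
        · intro ψ hψ
          by_cases h : ψ ∈ S <;> simp [h, hinc ψ hψ, hexc ψ hψ]
        · intro ψ hψ
          by_cases hne : ψ = φ
          · subst hne; simp [hφS, le_of_lt hlt]
          · by_cases h : ψ ∈ S <;> simp [h, hne, le_refl]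
        · exact ⟨φ, hφΦ, by simp [hφS, hlt]⟩
      nlinarith [mul_lt_mul_of_pos_left hprod hC]
    · intro φ hφS
      have hφΦ := hS hφS
      simp only [Finset.mem_filter]
      refine ⟨hφΦ, ?_⟩
      by_contra hlt
      push_neg at hlt
      have hT : S.erase φ ⊆ Φ := (Finset.erase_subset _ _).trans hS
      have := hmax (S.erase φ) hT
      rw [key S hS, key _ hT] at this
      have hprod : (∏ ψ ∈ Φ, (if ψ ∈ S then inc ψ else exc ψ)) <
          ∏ ψ ∈ Φ, (if ψ ∈ S.erase φ then inc ψ else exc ψ) := by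
        apply Finset.prod_lt_prod
        · intro ψ hψ
          by_cases h : ψ ∈ S <;> simp [h, hinc ψ hψ, hexc ψ hψ]
        · intro ψ hψ
          by_cases hne : ψ = φ
          · subst hne; simp [hφS, le_of_lt hlt, Finset.mem_erase]
          · by_cases h : ψ ∈ S <;> simp [h, hne, Finset.mem_erase, le_refl]
        · exact ⟨φ, hφΦ, by simp [hφS, hlt, Finset.mem_erase]⟩
      nlinarith [mul_lt_mul_of_pos_left hprod hC]
  · rintro ⟨h1, h2⟩ T hT
    rw [key S hS, key T hT]
    apply mul_le_mul_of_nonneg_left _ hC.le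
    apply Finset.prod_le_prod
    · intro ψ hψ
      by_cases h : ψ ∈ T <;> simp [h, le_of_lt (hinc ψ hψ), le_of_lt (hexc ψ hψ)]
    · intro ψ hψ
      by_cases hs : ψ ∈ S
      · have := (Finset.mem_filter.mp (h2 hs)).2
        by_cases h : ψ ∈ T <;> simp [h, hs, this]
      · have : ¬ exc ψ < inc ψ := fun hlt => hs (h1 (Finset.mem_filter.mpr ⟨hψ, hlt⟩))
        push_neg at this
        by_cases h : ψ ∈ T <;> simp [h, hs, this]
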